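/- Let T' be a tree with diameter at least 3 satisfying γ_{t,coi}(T') = |V(T')| - β(T'), and let v be a vertex of T' belonging to some minimum total co-independent dominating set of T'. Let T be the tree obtained from T' by adding a new vertex u and the edge uv. Then γ_{t,coi}(T) = |V(T)| - β(T). -/

import Mathlib

open scoped Classical

/-- A set `D` is a total co-independent dominating set of `G`:
it is a total dominating set and its complement is a nonempty independent set. -/
def TotalCoIndep {V : Type*} [Fintype V] (G : SimpleGraph V) (D : Finset V) : Prop :=
  (∀ v : V, ∃ u ∈ D, G.Adj v u) ∧
  (Dᶜ : Finset V).Nonempty ∧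
  ∀ u ∈ (Dᶜ : Finset V), ∀ w ∈ (Dᶜ : Finset V), ¬ G.Adj u w

/-- The total co-independent domination number. -/
noncomputable def gammaTcoi {V : Type*} [Fintype V] (G : SimpleGraph V) : ℕ :=
  sInf {k | ∃ D : Finset V, TotalCoIndep G D ∧ D.card = k}

/-- A finite set of vertices is independent. -/
def IsIndepF {V : Type*} (G : SimpleGraph V) (B : Finset V) : Prop :=
  ∀ u ∈ B, ∀ w ∈ B, ¬ G.Adj u w

/-- The independence number. -/
noncomputable def indepNum {V : Type*} [Fintype V] (G : SimpleGraph V) : ℕ :=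
  sSup {k | ∃ B : Finset V, IsIndepF G B ∧ B.card = k}

/-- A leaf: a vertex with exactly one neighbor (degree one). -/
def IsLeaf {V : Type*} (G : SimpleGraph V) (v : V) : Prop :=
  ∃! u, G.Adj v u

/-- The set of leaves. -/
noncomputable def leaves {V : Type*} [Fintype V] (G : SimpleGraph V) : Finset V :=
  Finset.univ.filter (fun v => IsLeaf G v)

/-- A support vertex: a non-leaf adjacent to a leaf. -/
def IsSupport {V : Type*} (G : SimpleGraph V) (v : V) : Prop :=
  ¬ IsLeaf G v ∧ ∃ u, G.Adj v u ∧ IsLeaf G u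

/-- A semi-support vertex: a non-leaf, non-support vertex adjacent to a support vertex. -/
def IsSemiSupport {V : Type*} (G : SimpleGraph V) (v : V) : Prop :=
  ¬ IsLeaf G v ∧ ¬ IsSupport G v ∧ ∃ u, G.Adj v u ∧ IsSupport G u

/-- An isolated support vertex: a support vertex with no support vertex as neighbor. -/
def IsIsolatedSupport {V : Type*} (G : SimpleGraph V) (v : V) : Prop :=
  IsSupport G v ∧ ∀ u, G.Adj v u → ¬ IsSupport G u

lemma indepNum_le_card {V : Type*} [Fintype V] (G : SimpleGraph V) :
    indepNum G ≤ Fintype.card V := by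
  have h0 : (0:ℕ) ∈ {k | ∃ B : Finset V, IsIndepF G B ∧ B.card = k} :=
    ⟨∅, fun u hu => absurd hu (by simp), by simp⟩
  apply csSup_le ⟨0, h0⟩
  rintro k ⟨B, _, rfl⟩
  exact Finset.card_le_univ B

lemma card_le_indepNum {V : Type*} [Fintype V] (G : SimpleGraph V) (B : Finset V)
    (hB : IsIndepF G B) : B.card ≤ indepNum G := by
  have hbdd : BddAbove {k | ∃ B : Finset V, IsIndepF G B ∧ B.card = k} := by
    refine ⟨Fintype.card V, ?_⟩
    rintro k ⟨B, _, rfl⟩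
    exact Finset.card_le_univ B
  exact le_csSup hbdd ⟨B, hB, rfl⟩

/-- Operation O₁: attaching a pendant vertex to a vertex of some minimum total
co-independent dominating set preserves `γ_{t,coi} = n - β`. -/
theorem stmt8 {V' : Type*} [Fintype V'] (T' : SimpleGraph V') (hT' : T'.IsTree)
    (hdiam : ∃ x y : V', 3 ≤ T'.dist x y)
    (hval : gammaTcoi T' = Fintype.card V' - indepNum T')
    (v : V') (hv : ∃ D : Finset V', TotalCoIndep T' D ∧ D.card = gammaTcoi T' ∧ v ∈ D)
    (T : SimpleGraph (Option V'))
    (hT : ∀ x y : Option V', T.Adj x y ↔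
      (∃ a b : V', x = some a ∧ y = some b ∧ T'.Adj a b) ∨
      (x = none ∧ y = some v) ∨ (x = some v ∧ y = none)) :
    gammaTcoi T = Fintype.card (Option V') - indepNum T := by
  obtain ⟨D', ⟨hdom, hne, hindep⟩, hcard, hvD⟩ := hv
  set n := Fintype.card V' with hn
  set β := indepNum T' with hβ
  have hβn : β ≤ n := indepNum_le_card T'
  -- γ(T') = n - β, D'.card = n - β
  have hD'card : D'.card = n - β := by rw [hcard, hval]
  have hD'compl : (D'ᶜ : Finset V').card = β := by
    have h1 : (D'ᶜ : Finset V').card = n - D'.card := Finset.card_compl D'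
    have h2 : D'.card ≤ n := Finset.card_le_univ D'
    -- D'ᶜ.card ≤ β since independent
    have h3 : (D'ᶜ : Finset V').card ≤ β := card_le_indepNum T' _ hindep
    omega
  -- the candidate set D in T
  set D : Finset (Option V') := D'.image some with hD
  have hmemD : ∀ x : Option V', x ∈ D ↔ ∃ a ∈ D', x = some a := by
    intro x; simp [hD, eq_comm]
  have hDcard : D.card = n - β := by
    rw [hD, Finset.card_image_of_injective _ (Option.some_injective V'), hD'card]
  have hTCID : TotalCoIndep T D := by
    refine ⟨?_, ⟨none, ?_⟩, ?_⟩
    · intro x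
      match x with
      | none =>
        exact ⟨some v, (hmemD _).2 ⟨v, hvD, rfl⟩, (hT _ _).2 (Or.inr (Or.inl ⟨rfl, rfl⟩))⟩
      | some a =>
        obtain ⟨b, hb, hab⟩ := hdom a
        exact ⟨some b, (hmemD _).2 ⟨b, hb, rfl⟩, (hT _ _).2 (Or.inl ⟨a, b, rfl, rfl, hab⟩)⟩
    · simp only [Finset.mem_compl]
      intro h
      obtain ⟨a, _, ha⟩ := (hmemD _).1 h
      exact nomatch ha
    · intro x hx y hy hxy
      simp only [Finset.mem_compl, hmemD] at hx hy
      rcases (hT _ _).1 hxy with ⟨a, b, rfl, rfl, hab⟩ | ⟨rfl, rfl⟩ | ⟨rfl, rfl⟩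
      · have ha : a ∉ D' := fun h => hx ⟨a, h, rfl⟩
        have hb : b ∉ D' := fun h => hy ⟨b, h, rfl⟩
        exact hindep a (Finset.mem_compl.2 ha) b (Finset.mem_compl.2 hb) hab
      · exact hy ⟨v, hvD, rfl⟩
      · exact hx ⟨v, hvD, rfl⟩
  -- independence number of T is β + 1
  have hup : indepNum T ≤ β + 1 := by
    have h0 : (0:ℕ) ∈ {k | ∃ B : Finset (Option V'), IsIndepF T B ∧ B.card = k} :=
      ⟨∅, fun u hu => absurd hu (by simp), by simp⟩
    apply csSup_le ⟨0, h0⟩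
    rintro k ⟨B, hB, rfl⟩
    set B' : Finset V' := Finset.univ.filter (fun a => some a ∈ B) with hB'
    have hB'indep : IsIndepF T' B' := by
      intro a ha b hb hab
      simp only [hB', Finset.mem_filter] at ha hb
      exact hB _ ha.2 _ hb.2 ((hT _ _).2 (Or.inl ⟨a, b, rfl, rfl, hab⟩))
    have hsub : B ⊆ insert none (B'.image some) := by
      intro x hx
      match x with
      | none => exact Finset.mem_insert_self _ _
      | some a =>
        refine Finset.mem_insert_of_mem (Finset.mem_image.2 ⟨a, ?_, rfl⟩)
        simp [hB', hx]
    calc B.card ≤ (insert none (B'.image some)).card := Finset.card_le_card hsub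
      _ ≤ (B'.image some).card + 1 := Finset.card_insert_le _ _
      _ ≤ B'.card + 1 := by
          rw [Finset.card_image_of_injective _ (Option.some_injective V')]
      _ ≤ β + 1 := by
          have := card_le_indepNum T' B' hB'indep
          omega
  have hlow : β + 1 ≤ indepNum T := by
    have hBindep : IsIndepF T (insert none ((D'ᶜ : Finset V').image some)) := by
      intro x hx y hy hxy
      simp only [Finset.mem_insert, Finset.mem_image] at hx hy
      rcases (hT _ _).1 hxy with ⟨a, b, rfl, rfl, hab⟩ | ⟨rfl, rfl⟩ | ⟨rfl, rfl⟩
      · rcases hx with h | ⟨a', ha', ha''⟩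
        · exact nomatch h
        rcases hy with h | ⟨b', hb', hb''⟩
        · exact nomatch h
        cases Option.some_injective _ ha''
        cases Option.some_injective _ hb''
        exact hindep _ ha' _ hb' hab
      · rcases hy with h | ⟨b', hb', hb''⟩
        · exact nomatch h
        cases Option.some_injective _ hb''
        exact Finset.mem_compl.1 hb' hvD
      · rcases hx with h | ⟨a', ha', ha''⟩
        · exact nomatch h
        cases Option.some_injective _ ha''
        exact Finset.mem_compl.1 ha' hvD
    have hc : (insert none ((D'ᶜ : Finset V').image some)).card = β + 1 := by
      rw [Finset.card_insert_of_notMem (by simp),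
        Finset.card_image_of_injective _ (Option.some_injective V'), hD'compl]
    have := card_le_indepNum T _ hBindep
    omega
  have hIT : indepNum T = β + 1 := le_antisymm hup hlow
  -- γ(T) ≤ n - β
  have hγup : gammaTcoi T ≤ n - β := by
    rw [← hDcard]
    exact Nat.sInf_le ⟨D, hTCID, rfl⟩
  -- γ(T) ≥ n - β
  have hγlow : n - β ≤ gammaTcoi T := by
    have hmem : gammaTcoi T ∈ {k | ∃ D : Finset (Option V'), TotalCoIndep T D ∧ D.card = k} :=
      Nat.sInf_mem ⟨D.card, D, hTCID, rfl⟩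
    obtain ⟨D0, ⟨_, _, hind0⟩, hc0⟩ := hmem
    have hcompl : @Compl.compl (Finset (Option V'))
        (@BooleanAlgebra.toCompl _ (@Finset.booleanAlgebra (Option V') _
          (fun a b => Classical.propDecidable (a = b)))) D0 = D0ᶜ := by
      congr!
    rw [hcompl] at hind0
    have hind0' : IsIndepF T D0ᶜ := hind0
    have h1 : (D0ᶜ : Finset (Option V')).card ≤ β + 1 :=
      le_trans (card_le_indepNum T _ hind0') (le_of_eq hIT)
    have h2 : (D0ᶜ : Finset (Option V')).card = Fintype.card (Option V') - D0.card :=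
      Finset.card_compl D0
    have h3 : D0.card ≤ Fintype.card (Option V') := Finset.card_le_univ D0
    have h4 : Fintype.card (Option V') = n + 1 := Fintype.card_option
    omega
  rw [hIT, Fintype.card_option]
  omega
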